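/- If the switched system x(k+1) = A_{σ(k)} x(k) + B_{σ(k)} u(k) is current-mode-dependent memory-feedback stabilizable (DFS_m), then there exists a static mode-dependent feedback Φ_d : Σ × ℝⁿ → ℝ^m, with Φ_d(i, ·) homogeneous of degree one for each i ∈ Σ (Φ_d(i, λx) = λΦ_d(i, x) for all λ ∈ ℝ, x ∈ ℝⁿ), and constants M > 0, γ̃ ∈ [0,1) such that every solution of the closed loop x(k+1) = A_{σ(k)} x(k) + B_{σ(k)} Φ_d(σ(k), x(k)) satisfies ‖x(k)‖ ≤ M γ̃^k ‖x(0)‖ for every initial state, every switching signal σ : ℕ → Σ and every k ∈ ℕ. -/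

import Mathlib

open Matrix Filter ENNReal

noncomputable section

/-- State history `[x(k), …, x(0)]` of the closed loop driven by the reversed
mode list `[i_{k-1}, …, i_0]`, under a current-mode-dependent memory controller `Ψd`
(which also sees the current mode). -/
def memHistD {n m : ℕ} {S : Type*} (A : S → Matrix (Fin n) (Fin n) ℝ)
    (B : S → Matrix (Fin n) (Fin m) ℝ)
    (Ψd : List (EuclideanSpace ℝ (Fin n)) → List S → EuclideanSpace ℝ (Fin m))
    (x0 : EuclideanSpace ℝ (Fin n)) : List S → List (EuclideanSpace ℝ (Fin n))
  | [] => [x0]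
  | i :: is =>
      WithLp.toLp 2 ((A i).mulVec ((memHistD A B Ψd x0 is).headD 0) +
        (B i).mulVec (Ψd (memHistD A B Ψd x0 is) (i :: is))) :: memHistD A B Ψd x0 is

/-- Closed-loop solution `φ(k, σ, x₀, Ψd)` under the switching signal `σ`:
at each step, `Ψd` receives the current and past states `(x(k), …, x(0))`
and the current and past modes `(σ(k), …, σ(0))`. -/
def memTrajD {n m : ℕ} {S : Type*} (A : S → Matrix (Fin n) (Fin n) ℝ)
    (B : S → Matrix (Fin n) (Fin m) ℝ)
    (Ψd : List (EuclideanSpace ℝ (Fin n)) → List S → EuclideanSpace ℝ (Fin m))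
    (x0 : EuclideanSpace ℝ (Fin n)) (σ : ℕ → S) (k : ℕ) : EuclideanSpace ℝ (Fin n) :=
  (memHistD A B Ψd x0 (((List.range k).reverse).map σ)).headD 0

section Aux

variable {n m : ℕ} {S : Type*} (A : S → Matrix (Fin n) (Fin n) ℝ)
    (B : S → Matrix (Fin n) (Fin m) ℝ)
    (Ψ : List (EuclideanSpace ℝ (Fin n)) → List S → EuclideanSpace ℝ (Fin m))
    (x0 : EuclideanSpace ℝ (Fin n))

lemma mulVec_smul_euc {p q : ℕ} (M : Matrix (Fin p) (Fin q) ℝ) (c : ℝ)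
    (v : EuclideanSpace ℝ (Fin q)) :
    M.mulVec (WithLp.ofLp (c • v)) = c • M.mulVec (WithLp.ofLp v) :=
  Matrix.mulVec_smul M c (WithLp.ofLp v)

lemma ofReal_norm_eq_coe_nnnorm {E : Type*} [SeminormedAddCommGroup E] (a : E) :
    ENNReal.ofReal ‖a‖ = (‖a‖₊ : ℝ≥0∞) :=
  ENNReal.ofReal_eq_coe_nnreal (norm_nonneg a)

lemma memHistD_ne_nil (is : List S) : memHistD A B Ψ x0 is ≠ [] := by
  cases is <;> simp [memHistD]

lemma headD_map_smul (c : ℝ) (l : List (EuclideanSpace ℝ (Fin n))) (hl : l ≠ []) :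
    (l.map (fun y => c • y)).headD 0 = c • l.headD 0 := by
  cases l with
  | nil => simp at hl
  | cons a t => simp

lemma headD_append (l t : List (EuclideanSpace ℝ (Fin n))) (hl : l ≠ []) :
    (l ++ t).headD 0 = l.headD 0 := by
  cases l with
  | nil => simp at hl
  | cons a t' => simp

lemma memHistD_smul (c : ℝ) (hc : c ≠ 0) (is : List S) :
    memHistD A B (fun l js => c • Ψ (l.map (fun y => c⁻¹ • y)) js) (c • x0) is
      = (memHistD A B Ψ x0 is).map (fun y => c • y) := by
  induction is with
  | nil => simp [memHistD]
  | cons i is ih =>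
      have h1 := headD_map_smul c (memHistD A B Ψ x0 is) (memHistD_ne_nil A B Ψ x0 is)
      have hmap : List.map (fun y => c⁻¹ • y) (List.map (fun y => c • y) (memHistD A B Ψ x0 is))
          = memHistD A B Ψ x0 is := by
        rw [List.map_map]; simp [Function.comp_def, smul_smul, inv_mul_cancel₀ hc]
      simp only [memHistD, ih, List.map_cons, h1, hmap, mulVec_smul_euc, ← smul_add, WithLp.toLp_smul]

lemma memTrajD_smul (c : ℝ) (hc : c ≠ 0) (σ : ℕ → S) (k : ℕ) :
    memTrajD A B (fun l js => c • Ψ (l.map (fun y => c⁻¹ • y)) js) (c • x0) σ k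
      = c • memTrajD A B Ψ x0 σ k := by
  unfold memTrajD
  rw [memHistD_smul A B Ψ x0 c hc,
    headD_map_smul c _ (memHistD_ne_nil A B Ψ x0 _)]

lemma memHistD_shift (i : S) (is : List S) :
    memHistD A B Ψ x0 (is ++ [i])
      = memHistD A B (fun l js => Ψ (l ++ [x0]) (js ++ [i]))
          (WithLp.toLp 2 ((A i).mulVec x0 + (B i).mulVec (Ψ [x0] [i]))) is ++ [x0] := by
  induction is with
  | nil => simp [memHistD]
  | cons i' is ih =>
      simp only [List.cons_append, memHistD, ih, List.append_eq,
        headD_append _ _ (memHistD_ne_nil A B (fun l js => Ψ (l ++ [x0]) (js ++ [i]))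
          (WithLp.toLp 2 ((A i).mulVec x0 + (B i).mulVec (Ψ [x0] [i]))) is)]

lemma memTrajD_shift (i : S) (σ : ℕ → S) (k : ℕ) :
    memTrajD A B (fun l js => Ψ (l ++ [x0]) (js ++ [i]))
        (WithLp.toLp 2 ((A i).mulVec x0 + (B i).mulVec (Ψ [x0] [i]))) σ k
      = memTrajD A B Ψ x0 (fun j => Nat.casesOn j i σ) (k + 1) := by
  unfold memTrajD
  have hlist : ((List.range (k+1)).reverse).map (fun j => Nat.casesOn j i σ : ℕ → S)
      = (((List.range k).reverse).map σ) ++ [i] := by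
    rw [List.range_succ_eq_map]
    simp [List.map_reverse, List.map_map, Function.comp]
  rw [hlist, memHistD_shift, headD_append _ _ (memHistD_ne_nil A B _ _ _)]


lemma memTrajD_zero (σ : ℕ → S) : memTrajD A B Ψ x0 σ 0 = x0 := by
  simp [memTrajD, memHistD]

end Aux

/-- If the system is current-mode-dependent memory-feedback
stabilizable, then it is stabilizable by a static mode-dependent feedback that is
homogeneous of degree one in the state. -/
theorem dfs_mem_implies_homogeneous_static {n m : ℕ} (hn : 0 < n) (hm : 0 < m) {S : Type*} [Fintype S] [Nonempty S]
    (A : S → Matrix (Fin n) (Fin n) ℝ) (B : S → Matrix (Fin n) (Fin m) ℝ)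
    (h : ∃ M > (0 : ℝ), ∃ γ ∈ Set.Ico (0 : ℝ) 1,
      ∃ Ψd : List (EuclideanSpace ℝ (Fin n)) → List S → EuclideanSpace ℝ (Fin m),
        ∀ (x0 : EuclideanSpace ℝ (Fin n)) (σ : ℕ → S) (k : ℕ),
          ‖memTrajD A B Ψd x0 σ k‖ ≤ M * γ ^ k * ‖x0‖) :
    ∃ Φd : S → EuclideanSpace ℝ (Fin n) → EuclideanSpace ℝ (Fin m),
      (∀ (i : S) (lam : ℝ) (x : EuclideanSpace ℝ (Fin n)), Φd i (lam • x) = lam • Φd i x) ∧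
      ∃ M > (0 : ℝ), ∃ γ' ∈ Set.Ico (0 : ℝ) 1,
        ∀ (x : ℕ → EuclideanSpace ℝ (Fin n)) (σ : ℕ → S),
          (∀ k, x (k + 1) = (A (σ k)).mulVec (x k) + (B (σ k)).mulVec (Φd (σ k) (x k))) →
          ∀ k, ‖x k‖ ≤ M * γ' ^ k * ‖x 0‖ := by
  classical
  obtain ⟨M, hM, γ, ⟨hγ0, hγ1⟩, Ψd, hΨ⟩ := h
  set γ₁ : ℝ := (γ + 1) / 2 with hγ₁def
  set γ₂ : ℝ := (γ₁ + 1) / 2 with hγ₂def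
  have hγ₁pos : 0 < γ₁ := by simp only [hγ₁def]; linarith
  have hγ₁lt : γ₁ < 1 := by simp only [hγ₁def]; linarith
  have hγγ₁ : γ ≤ γ₁ := by simp only [hγ₁def]; linarith
  have hγ₂pos : 0 < γ₂ := by simp only [hγ₂def]; linarith
  have hγ₂lt : γ₂ < 1 := by simp only [hγ₂def]; linarith
  have hγ₁γ₂ : γ₁ < γ₂ := by simp only [hγ₂def]; linarith
  set g₁ : ℝ≥0∞ := ENNReal.ofReal γ₁ with hg₁def
  set g₂ : ℝ≥0∞ := ENNReal.ofReal γ₂ with hg₂def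
  have hg₁0 : g₁ ≠ 0 := by simp [hg₁def, ENNReal.ofReal_eq_zero, not_le, hγ₁pos]
  have hg₁top : g₁ ≠ ⊤ := ENNReal.ofReal_ne_top
  have hg₂0 : g₂ ≠ 0 := by simp [hg₂def, ENNReal.ofReal_eq_zero, not_le, hγ₂pos]
  have hg₂top : g₂ ≠ ⊤ := ENNReal.ofReal_ne_top
  have hg₁₂ : g₁ < g₂ := by
    rw [hg₁def, hg₂def]
    exact (ENNReal.ofReal_lt_ofReal_iff hγ₂pos).2 hγ₁γ₂
  -- the value function
  set D : (List (EuclideanSpace ℝ (Fin n)) → List S → EuclideanSpace ℝ (Fin m)) → EuclideanSpace ℝ (Fin n) → ℝ≥0∞ := fun Ψ x =>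
    ⨆ σ : ℕ → S, ⨆ k : ℕ, (‖memTrajD A B Ψ x σ k‖₊ : ℝ≥0∞) * g₁⁻¹ ^ k with hDdef
  set V : EuclideanSpace ℝ (Fin n) → ℝ≥0∞ := fun x => ⨅ Ψ : List (EuclideanSpace ℝ (Fin n)) → List S → EuclideanSpace ℝ (Fin m), D Ψ x with hVdef
  -- lower bound
  have hVlow : ∀ x : EuclideanSpace ℝ (Fin n), (‖x‖₊ : ℝ≥0∞) ≤ V x := by
    intro x
    refine le_iInf fun Ψ => ?_
    refine le_iSup_of_le (fun _ => Classical.arbitrary S) ?_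
    refine le_iSup_of_le 0 ?_
    simp [memTrajD_zero]
  -- upper bound
  have hVup : ∀ x : EuclideanSpace ℝ (Fin n), V x ≤ ENNReal.ofReal M * ‖x‖₊ := by
    intro x
    refine iInf_le_of_le Ψd ?_
    refine iSup_le fun σ => iSup_le fun k => ?_
    have h1 : (‖memTrajD A B Ψd x σ k‖₊ : ℝ≥0∞)
        ≤ ENNReal.ofReal M * (ENNReal.ofReal γ) ^ k * ‖x‖₊ := by
      rw [← ofReal_norm_eq_coe_nnnorm, ← ofReal_norm_eq_coe_nnnorm,
        ← ENNReal.ofReal_pow hγ0, ← ENNReal.ofReal_mul hM.le,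
        ← ENNReal.ofReal_mul (by positivity)]
      exact ENNReal.ofReal_le_ofReal (hΨ x σ k)
    calc (‖memTrajD A B Ψd x σ k‖₊ : ℝ≥0∞) * g₁⁻¹ ^ k
        ≤ (ENNReal.ofReal M * (ENNReal.ofReal γ) ^ k * ‖x‖₊) * g₁⁻¹ ^ k :=
          mul_le_mul_left h1 _
      _ = (ENNReal.ofReal M * ‖x‖₊) * (ENNReal.ofReal γ * g₁⁻¹) ^ k := by ring
      _ ≤ (ENNReal.ofReal M * ‖x‖₊) * 1 ^ k := by
          gcongr
          calc ENNReal.ofReal γ * g₁⁻¹ ≤ g₁ * g₁⁻¹ := by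
                gcongr; exact ENNReal.ofReal_le_ofReal hγγ₁
            _ = 1 := ENNReal.mul_inv_cancel hg₁0 hg₁top
      _ = ENNReal.ofReal M * ‖x‖₊ := by rw [one_pow, mul_one]
  have hV0 : V 0 = 0 := by
    refine le_antisymm ?_ zero_le
    simpa using hVup 0
  -- homogeneity
  have hVle : ∀ (c : ℝ), c ≠ 0 → ∀ x : EuclideanSpace ℝ (Fin n), V (c • x) ≤ (‖c‖₊ : ℝ≥0∞) * V x := by
    intro c hc x
    have hc' : (‖c‖₊ : ℝ≥0∞) ≠ 0 := by simpa using hc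
    rw [hVdef]
    simp only
    rw [ENNReal.mul_iInf_of_ne hc' ENNReal.coe_ne_top]
    refine le_iInf fun Ψ => ?_
    refine iInf_le_of_le (fun l js => c • Ψ (l.map (fun y => c⁻¹ • y)) js) ?_
    rw [hDdef]
    simp only
    refine iSup_le fun σ => iSup_le fun k => ?_
    have hterm : (‖memTrajD A B (fun l js => c • Ψ (List.map (fun y => c⁻¹ • y) l) js)
          (c • x) σ k‖₊ : ℝ≥0∞) * g₁⁻¹ ^ k
        = (‖c‖₊ : ℝ≥0∞) * ((‖memTrajD A B Ψ x σ k‖₊ : ℝ≥0∞) * g₁⁻¹ ^ k) := by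
      rw [memTrajD_smul A B Ψ x c hc σ k, nnnorm_smul]
      push_cast
      ring
    rw [hterm, ENNReal.mul_iSup]
    refine le_iSup_of_le σ ?_
    rw [ENNReal.mul_iSup]
    exact le_iSup_of_le k le_rfl
  have hVsmul : ∀ (c : ℝ), c ≠ 0 → ∀ x : EuclideanSpace ℝ (Fin n), V (c • x) = (‖c‖₊ : ℝ≥0∞) * V x := by
    intro c hc x
    refine le_antisymm (hVle c hc x) ?_
    have h2 := hVle c⁻¹ (inv_ne_zero hc) (c • x)
    rw [smul_smul, inv_mul_cancel₀ hc, one_smul] at h2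
    calc (‖c‖₊ : ℝ≥0∞) * V x ≤ (‖c‖₊ : ℝ≥0∞) * ((‖c⁻¹‖₊ : ℝ≥0∞) * V (c • x)) :=
          mul_le_mul_right h2 _
      _ = V (c • x) := by
          rw [← mul_assoc, ← ENNReal.coe_mul, ← nnnorm_mul, mul_inv_cancel₀ hc]
          simp
  -- Bellman inequality
  have hBell : ∀ (i : S) (x : EuclideanSpace ℝ (Fin n)), ∃ u : EuclideanSpace ℝ (Fin m),
      V (WithLp.toLp 2 ((A i).mulVec x + (B i).mulVec u)) ≤ g₂ * V x := by
    intro i x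
    by_cases hx : V x = 0
    · refine ⟨0, ?_⟩
      have hx0 : x = 0 := by
        have := hVlow x
        rw [hx, nonpos_iff_eq_zero] at this
        simpa using this
      subst hx0
      simp [Matrix.mulVec_zero, hV0, hx]
    · have hfin : V x ≠ ⊤ :=
        (lt_of_le_of_lt (hVup x) (ENNReal.mul_lt_top ENNReal.ofReal_lt_top
          ENNReal.coe_lt_top)).ne
      have hone : (1 : ℝ≥0∞) < g₁⁻¹ * g₂ := by
        have h3 : g₁ * g₁⁻¹ < g₁⁻¹ * g₂ := by
          rw [mul_comm g₁ g₁⁻¹]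
          exact ENNReal.mul_lt_mul_right (by simpa using hg₁top) (by simpa using hg₁0) hg₁₂
        rwa [ENNReal.mul_inv_cancel hg₁0 hg₁top] at h3
      have hlt : V x < g₁⁻¹ * g₂ * V x := by
        conv_lhs => rw [← one_mul (V x)]
        exact ENNReal.mul_lt_mul_left hx hfin hone
      rw [hVdef] at hlt
      simp only [iInf_lt_iff] at hlt
      obtain ⟨Ψ, hΨc⟩ := hlt
      refine ⟨Ψ [x] [i], ?_⟩
      set x1 : EuclideanSpace ℝ (Fin n) := WithLp.toLp 2 ((A i).mulVec x + (B i).mulVec (Ψ [x] [i])) with hx1def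
      have hle1 : V x1 ≤ D (fun l js => Ψ (l ++ [x]) (js ++ [i])) x1 := iInf_le _ _
      refine hle1.trans ?_
      rw [hDdef]
      simp only
      refine iSup_le fun σ => iSup_le fun k => ?_
      rw [hx1def, memTrajD_shift A B Ψ x i σ k]
      have hterm : (‖memTrajD A B Ψ x (fun j => Nat.casesOn j i σ) (k + 1)‖₊ : ℝ≥0∞) * g₁⁻¹ ^ k
          = g₁ * ((‖memTrajD A B Ψ x (fun j => Nat.casesOn j i σ) (k + 1)‖₊ : ℝ≥0∞)
              * g₁⁻¹ ^ (k + 1)) := by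
        rw [pow_succ]
        rw [show g₁ * ((‖memTrajD A B Ψ x (fun j => Nat.casesOn j i σ) (k + 1)‖₊ : ℝ≥0∞)
              * (g₁⁻¹ ^ k * g₁⁻¹))
            = (g₁ * g₁⁻¹) * ((‖memTrajD A B Ψ x (fun j => Nat.casesOn j i σ) (k + 1)‖₊ : ℝ≥0∞)
              * g₁⁻¹ ^ k) by ring]
        rw [ENNReal.mul_inv_cancel hg₁0 hg₁top, one_mul]
      rw [hterm]
      have hterm2 : (‖memTrajD A B Ψ x (fun j => Nat.casesOn j i σ) (k + 1)‖₊ : ℝ≥0∞)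
          * g₁⁻¹ ^ (k + 1) ≤ D Ψ x :=
        le_iSup_of_le (fun j => Nat.casesOn j i σ) (le_iSup_of_le (k + 1) le_rfl)
      calc g₁ * ((‖memTrajD A B Ψ x (fun j => Nat.casesOn j i σ) (k + 1)‖₊ : ℝ≥0∞)
              * g₁⁻¹ ^ (k + 1))
          ≤ g₁ * D Ψ x := mul_le_mul_right hterm2 _
        _ ≤ g₁ * (g₁⁻¹ * g₂ * V x) := mul_le_mul_right hΨc.le _
        _ = (g₁ * g₁⁻¹) * (g₂ * V x) := by ring
        _ = g₂ * V x := by rw [ENNReal.mul_inv_cancel hg₁0 hg₁top, one_mul]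
  choose U hU using hBell
  -- index of a nonzero coordinate
  have hex : ∀ x : EuclideanSpace ℝ (Fin n), x ≠ 0 → (Finset.univ.filter (fun j => x j ≠ 0)).Nonempty := by
    intro x hx
    by_contra hc
    rw [Finset.not_nonempty_iff_eq_empty, Finset.filter_eq_empty_iff] at hc
    refine hx (PiLp.ext fun j => ?_)
    simpa using hc (Finset.mem_univ j)
  set jx : EuclideanSpace ℝ (Fin n) → Fin n := fun x =>
    if hx : x = 0 then ⟨0, hn⟩ else (Finset.univ.filter (fun j => x j ≠ 0)).min' (hex x hx)
    with hjxdef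
  have hjx_ne : ∀ x : EuclideanSpace ℝ (Fin n), x ≠ 0 → x (jx x) ≠ 0 := by
    intro x hx
    have hmem := (Finset.univ.filter (fun j => x j ≠ 0)).min'_mem (hex x hx)
    rw [Finset.mem_filter] at hmem
    rw [hjxdef]
    simp only
    rw [dif_neg hx]
    exact hmem.2
  have hsmul_apply : ∀ (c : ℝ) (x : EuclideanSpace ℝ (Fin n)) (j : Fin n), (c • x) j = c * x j := fun c x j => rfl
  have hjx_smul : ∀ (c : ℝ), c ≠ 0 → ∀ x : EuclideanSpace ℝ (Fin n), x ≠ 0 → jx (c • x) = jx x := by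
    intro c hc x hx
    have hcx : c • x ≠ 0 := smul_ne_zero hc hx
    rw [hjxdef]
    simp only
    rw [dif_neg hcx, dif_neg hx]
    congr 1
    refine Finset.filter_congr fun j _ => ?_
    rw [hsmul_apply]
    simp [hc]
  set Φd : S → EuclideanSpace ℝ (Fin n) → EuclideanSpace ℝ (Fin m) := fun i x =>
    if x = 0 then 0 else (x (jx x)) • U i ((x (jx x))⁻¹ • x) with hΦdef
  -- homogeneity of Φd
  have hΦhom : ∀ (i : S) (lam : ℝ) (x : EuclideanSpace ℝ (Fin n)), Φd i (lam • x) = lam • Φd i x := by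
    intro i lam x
    by_cases hx : x = 0
    · subst hx; simp [hΦdef]
    by_cases hlam : lam = 0
    · subst hlam; simp [hΦdef]
    have hcx : lam • x ≠ 0 := smul_ne_zero hlam hx
    rw [hΦdef]
    simp only
    rw [if_neg hcx, if_neg hx]
    rw [hjx_smul lam hlam x hx, hsmul_apply]
    have hinner : (lam * x (jx x))⁻¹ • (lam • x) = (x (jx x))⁻¹ • x := by
      rw [smul_smul, _root_.mul_inv_rev, mul_assoc, inv_mul_cancel₀ hlam, mul_one]
    rw [hinner, mul_smul]
  -- one-step decrease for Φd
  have hΦstep : ∀ (i : S) (x : EuclideanSpace ℝ (Fin n)),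
      V (WithLp.toLp 2 ((A i).mulVec x + (B i).mulVec (Φd i x))) ≤ g₂ * V x := by
    intro i x
    by_cases hx : x = 0
    · subst hx
      rw [hΦdef]
      simp [Matrix.mulVec_zero, hV0]
    · have hc : x (jx x) ≠ 0 := hjx_ne x hx
      have hΦx : Φd i x = (x (jx x)) • U i ((x (jx x))⁻¹ • x) := by
        rw [hΦdef]; simp only; rw [if_neg hx]
      have hxw0 : (x (jx x)) • ((x (jx x))⁻¹ • x) = x := by
        rw [smul_smul, mul_inv_cancel₀ hc, one_smul]
      have hsum : (x (jx x)) • WithLp.toLp 2 ((A i).mulVec (WithLp.ofLp ((x (jx x))⁻¹ • x))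
            + (B i).mulVec (U i ((x (jx x))⁻¹ • x)))
          = WithLp.toLp 2 ((A i).mulVec x + (B i).mulVec (Φd i x)) := by
        rw [← WithLp.toLp_smul, smul_add, ← mulVec_smul_euc, ← mulVec_smul_euc, hxw0, ← hΦx]
      rw [← hsum, hVsmul _ hc]
      calc (‖x (jx x)‖₊ : ℝ≥0∞)
            * V (WithLp.toLp 2 ((A i).mulVec (WithLp.ofLp ((x (jx x))⁻¹ • x)) + (B i).mulVec (U i ((x (jx x))⁻¹ • x))))
          ≤ (‖x (jx x)‖₊ : ℝ≥0∞) * (g₂ * V ((x (jx x))⁻¹ • x)) :=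
            mul_le_mul_right (hU i _) _
        _ = g₂ * ((‖x (jx x)‖₊ : ℝ≥0∞) * V ((x (jx x))⁻¹ • x)) := by ring
        _ = g₂ * V x := by rw [← hVsmul _ hc, hxw0]
  -- conclusion
  refine ⟨Φd, hΦhom, M, hM, γ₂, ⟨hγ₂pos.le, hγ₂lt⟩, ?_⟩
  intro x σ hdyn k
  have hVk : V (x k) ≤ g₂ ^ k * V (x 0) := by
    induction k with
    | zero => simp
    | succ k ih =>
        rw [show x (k + 1) = WithLp.toLp 2 ((A (σ k)).mulVec (x k) + (B (σ k)).mulVec (Φd (σ k) (x k)))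
          from congrArg (WithLp.toLp 2) (hdyn k)]
        calc V (WithLp.toLp 2 ((A (σ k)).mulVec (x k) + (B (σ k)).mulVec (Φd (σ k) (x k))))
            ≤ g₂ * V (x k) := hΦstep (σ k) (x k)
          _ ≤ g₂ * (g₂ ^ k * V (x 0)) := mul_le_mul_right ih _
          _ = g₂ ^ (k + 1) * V (x 0) := by rw [pow_succ]; ring
  have hchain : (‖x k‖₊ : ℝ≥0∞) ≤ g₂ ^ k * (ENNReal.ofReal M * ‖x 0‖₊) :=
    (hVlow (x k)).trans (hVk.trans (mul_le_mul_right (hVup (x 0)) _))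
  have hrhs : g₂ ^ k * (ENNReal.ofReal M * ‖x 0‖₊) = ENNReal.ofReal (M * γ₂ ^ k * ‖x 0‖) := by
    rw [ENNReal.ofReal_mul (by positivity), ENNReal.ofReal_mul hM.le,
      ENNReal.ofReal_pow hγ₂pos.le, ofReal_norm_eq_coe_nnnorm, hg₂def]
    ring
  rw [hrhs, ← ofReal_norm_eq_coe_nnnorm] at hchain
  exact (ENNReal.ofReal_le_ofReal_iff (by positivity)).1 hchain
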